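/- If a rooted binary tree T = (T_a, T_b) minimizes Δ_CS = C - S among all rooted binary trees with n leaves, then T_a minimizes Δ_CS among rooted binary trees with n_a leaves and T_b minimizes Δ_CS among rooted binary trees with n_b leaves. -/
import Mathlib


/-- Rooted binary trees: a leaf, or an internal vertex with two child subtrees. -/
inductive BTree where
  | leaf : BTree
  | node : BTree → BTree → BTree
deriving DecidableEq

namespace BTree

/-- Number of leaves of a rooted binary tree. -/
def numLeaves : BTree → ℕ
  | leaf => 1
  | node l r => numLeaves l + numLeaves r

/-- Sackin index: sum over internal vertices `v` of `n_{v_a} + n_{v_b}`. -/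
def sackin : BTree → ℕ
  | leaf => 0
  | node l r => sackin l + sackin r + (numLeaves l + numLeaves r)

/-- Colless index: sum over internal vertices `v` of `|n_{v_a} - n_{v_b}|`. -/
def colless : BTree → ℕ
  | leaf => 0
  | node l r =>
      colless l + colless r +
        (max (numLeaves l) (numLeaves r) - min (numLeaves l) (numLeaves r))

/-- `N_a`: sum over internal vertices of the larger child-subtree leaf count. -/
def Na : BTree → ℕ
  | leaf => 0
  | node l r => Na l + Na r + max (numLeaves l) (numLeaves r)

/-- `N_b`: sum over internal vertices of the smaller child-subtree leaf count. -/
def Nb : BTree → ℕ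
  | leaf => 0
  | node l r => Nb l + Nb r + min (numLeaves l) (numLeaves r)

/-- `Δ_CS = C - S`, as an integer. -/
def deltaCS (T : BTree) : ℤ := (colless T : ℤ) - (sackin T : ℤ)

/-- Caterpillar trees: every internal vertex has at least one leaf child. -/
def isCaterpillar : BTree → Prop
  | leaf => True
  | node l r => (l = leaf ∧ isCaterpillar r) ∨ (r = leaf ∧ isCaterpillar l)

/-- The fully balanced tree of height `h`. -/
def fbTree : ℕ → BTree
  | 0 => leaf
  | h + 1 => node (fbTree h) (fbTree h)

end BTree

open BTree in
lemma deltaCS_node (l r : BTree) :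
    deltaCS (BTree.node l r) =
      deltaCS l + deltaCS r - 2 * min (numLeaves l) (numLeaves r) := by
  unfold deltaCS
  simp only [colless, sackin]
  have hle : min (numLeaves l) (numLeaves r) ≤ max (numLeaves l) (numLeaves r) :=
    min_le_max
  push_cast [hle]
  have : ((max (numLeaves l) (numLeaves r) : ℤ) + min (numLeaves l) (numLeaves r))
      = (numLeaves l : ℤ) + numLeaves r := by
    rcases le_total (numLeaves l) (numLeaves r) with h | h <;>
      simp [max_eq_right, min_eq_left, max_eq_left, min_eq_right, h] <;> ring
  omega

open BTree in
/-- if `T = (T_a, T_b)` minimizes `Δ_CS` among trees with `n` leaves,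
then `T_a` and `T_b` minimize `Δ_CS` among trees with `n_a`, resp. `n_b`, leaves. -/
theorem subtrees_of_deltaCS_min_are_min (Ta Tb : BTree)
    (h : ∀ T' : BTree, numLeaves T' = numLeaves (BTree.node Ta Tb) →
      deltaCS (BTree.node Ta Tb) ≤ deltaCS T') :
    (∀ T' : BTree, numLeaves T' = numLeaves Ta → deltaCS Ta ≤ deltaCS T') ∧
    (∀ T' : BTree, numLeaves T' = numLeaves Tb → deltaCS Tb ≤ deltaCS T') := by
  constructor
  · intro T' hT'
    have key := h (BTree.node T' Tb) (by simp [numLeaves, hT'])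
    rw [deltaCS_node, deltaCS_node, hT'] at key
    omega
  · intro T' hT'
    have key := h (BTree.node Ta T') (by simp [numLeaves, hT'])
    rw [deltaCS_node, deltaCS_node, hT'] at key
    omega
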